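/- Let u ∈ (0,1), α, c, t ∈ ℝ, set L = (1/2)log(1/u), and let X ∼ dN(α,u). Then the moment generating function of Y = c(X − α) satisfies E[e^{tY}] = Σ_{ℓ∈ℤ} u^{(ℓ−α)²/2} e^{tc(ℓ−α)} / Σ_{ℓ∈ℤ} u^{(ℓ−α)²/2} = exp(t²c²/(4L)) · θ(α + tc/(2L); πi/L) / θ(α; πi/L). (Both theta values here are positive real numbers.) -/

import Mathlib

open MeasureTheory Filter Complex
open scoped Real Topology BigOperators NNReal

noncomputable section

lemma gauss_summable (L β : ℝ) (hL : 0 < L) :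
    Summable (fun n : ℤ => Real.exp (-L * ((n : ℝ) - β) ^ 2)) := by
  have hπ : (0:ℝ) < π := Real.pi_pos
  set τ : ℂ := Complex.I * ((L / π : ℝ) : ℂ) with hτ
  set z : ℂ := Complex.I * ((-(L * β / π) : ℝ) : ℂ) with hz
  have hτim : 0 < τ.im := by
    simp only [hτ, Complex.mul_im, Complex.I_re, Complex.I_im, Complex.ofReal_re,
      Complex.ofReal_im, zero_mul, one_mul, add_zero, mul_zero, zero_add]
    positivity
  have hsum : Summable (fun n : ℤ => jacobiTheta₂_term n z τ) :=
    (summable_jacobiTheta₂_term_iff z τ).mpr hτim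
  have hnorm : Summable (fun n : ℤ => ‖jacobiTheta₂_term n z τ‖) :=
    summable_norm_iff.mpr hsum
  have hkey : Summable (fun n : ℤ =>
      Real.exp (L * β ^ 2) * Real.exp (-L * ((n : ℝ) - β) ^ 2)) := by
    refine hnorm.congr fun n => ?_
    rw [norm_jacobiTheta₂_term, ← Real.exp_add]
    congr 1
    simp only [hτ, hz, Complex.mul_im, Complex.I_re, Complex.I_im, Complex.ofReal_re,
      Complex.ofReal_im, zero_mul, one_mul, add_zero, mul_zero, zero_add]
    field_simp
    ring
  have := hkey.mul_left (Real.exp (-(L * β ^ 2)))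
  refine this.congr fun n => ?_
  rw [← mul_assoc, ← Real.exp_add]
  simp

lemma theta_real (L β : ℝ) (hL : 0 < L) :
    jacobiTheta₂ ((β : ℝ) : ℂ) ((Real.pi : ℂ) * Complex.I / (L : ℂ)) =
      (((L / π) ^ ((1:ℝ)/2) * ∑' n : ℤ, Real.exp (-L * ((n : ℝ) - β) ^ 2) : ℝ) : ℂ) := by
  have hπ : (0:ℝ) < π := Real.pi_pos
  have hπℂ : (π : ℂ) ≠ 0 := by exact_mod_cast hπ.ne'
  have hLℂ : (L : ℂ) ≠ 0 := by exact_mod_cast hL.ne'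
  have ha : (0:ℝ) < L / π := div_pos hL hπ
  have haC : 0 < (((L / π : ℝ) : ℂ)).re := by simpa using ha
  have key := Complex.tsum_exp_neg_quadratic haC ((L * β / π : ℝ) : ℂ)
  have hLHS : ∀ n : ℤ,
      cexp (-↑π * ((L / π : ℝ) : ℂ) * (n : ℂ) ^ 2 + 2 * ↑π * ((L * β / π : ℝ) : ℂ) * (n : ℂ)) =
      Complex.exp ((L * β ^ 2 : ℝ) : ℂ) * ((Real.exp (-L * ((n : ℝ) - β) ^ 2) : ℝ) : ℂ) := by
    intro n
    rw [Complex.ofReal_exp, ← Complex.exp_add]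
    congr 1
    push_cast
    field_simp
    ring
  have hRHS : ∀ n : ℤ,
      cexp (-↑π / ((L / π : ℝ) : ℂ) * ((n : ℂ) + Complex.I * ((L * β / π : ℝ) : ℂ)) ^ 2) =
      Complex.exp ((L * β ^ 2 : ℝ) : ℂ) *
        jacobiTheta₂_term n (-(β : ℂ)) ((Real.pi : ℂ) * Complex.I / (L : ℂ)) := by
    intro n
    rw [jacobiTheta₂_term, ← Complex.exp_add]
    congr 1
    push_cast
    field_simp
    ring_nf
    simp_rw [Complex.I_sq]
    ring
  rw [tsum_congr hLHS, tsum_congr hRHS, tsum_mul_left, tsum_mul_left] at key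
  have hθsum : (∑' n : ℤ, jacobiTheta₂_term n (-(β : ℂ)) ((Real.pi : ℂ) * Complex.I / (L : ℂ)))
      = jacobiTheta₂ (-(β : ℂ)) ((Real.pi : ℂ) * Complex.I / (L : ℂ)) := rfl
  rw [hθsum, jacobiTheta₂_neg_left] at key
  have hexp : Complex.exp ((L * β ^ 2 : ℝ) : ℂ) ≠ 0 := Complex.exp_ne_zero _
  have key2 : (∑' n : ℤ, ((Real.exp (-L * ((n : ℝ) - β) ^ 2) : ℝ) : ℂ)) =
      1 / ((L / π : ℝ) : ℂ) ^ ((1:ℂ)/2) *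
        jacobiTheta₂ ((β : ℝ) : ℂ) ((Real.pi : ℂ) * Complex.I / (L : ℂ)) := by
    apply mul_left_cancel₀ hexp
    rw [key]; ring
  have hapow : (((L / π : ℝ) : ℂ)) ^ ((1:ℂ)/2) = (((L / π) ^ ((1:ℝ)/2) : ℝ) : ℂ) := by
    rw [Complex.ofReal_cpow ha.le]
    norm_num
  have hane : (((L / π) ^ ((1:ℝ)/2) : ℝ) : ℂ) ≠ 0 := by
    have : (0:ℝ) < (L / π) ^ ((1:ℝ)/2) := Real.rpow_pos_of_pos ha _
    exact_mod_cast this.ne'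
  rw [← Complex.ofReal_tsum] at key2
  rw [hapow] at key2
  rw [Complex.ofReal_mul, key2]
  field_simp

/-- MGF of the discrete Gaussian in terms of the Jacobi theta function
`θ(z;τ) = jacobiTheta₂ z τ = Σ_{ℓ∈ℤ} e^{2πiℓz+πiℓ²τ}`: if `X ∼ dN(α,u)`, `u ∈ (0,1)`,
`L = (1/2)log(1/u)` and `Y = c(X−α)`, then
`E e^{tY} = Σ_ℓ u^{(ℓ−α)²/2}e^{tc(ℓ−α)} / Σ_ℓ u^{(ℓ−α)²/2}
          = exp(t²c²/(4L))·θ(α+tc/(2L); πi/L)/θ(α; πi/L)`,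
and both theta values are positive real numbers. -/
theorem discrete_gaussian_mgf_theta (u α c t : ℝ) (hu : u ∈ Set.Ioo (0:ℝ) 1)
    (L : ℝ) (hL : L = (1 / 2) * Real.log (1 / u))
    (Ω : Type) [MeasurableSpace Ω] (μ : Measure Ω) [IsProbabilityMeasure μ]
    (X : Ω → ℤ) (hX : Measurable X)
    (hpmf : ∀ k : ℤ, (μ {ω | X ω = k}).toReal =
      u ^ ((((k : ℝ) - α) ^ 2) / 2) / ∑' j : ℤ, u ^ ((((j : ℝ) - α) ^ 2) / 2)) :
    (∫ ω, Real.exp (t * (c * ((X ω : ℝ) - α))) ∂μ) =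
        (∑' ℓ : ℤ, u ^ ((((ℓ : ℝ) - α) ^ 2) / 2) * Real.exp (t * c * ((ℓ : ℝ) - α))) /
          (∑' ℓ : ℤ, u ^ ((((ℓ : ℝ) - α) ^ 2) / 2)) ∧
      ((∫ ω, Real.exp (t * (c * ((X ω : ℝ) - α))) ∂μ : ℝ) : ℂ) =
        Complex.exp ((t ^ 2 * c ^ 2 / (4 * L) : ℝ)) *
          jacobiTheta₂ ((α + t * c / (2 * L) : ℝ) : ℂ) ((Real.pi : ℂ) * Complex.I / (L : ℂ)) /
          jacobiTheta₂ ((α : ℝ) : ℂ) ((Real.pi : ℂ) * Complex.I / (L : ℂ)) ∧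
      (jacobiTheta₂ ((α + t * c / (2 * L) : ℝ) : ℂ)
          ((Real.pi : ℂ) * Complex.I / (L : ℂ))).im = 0 ∧
      0 < (jacobiTheta₂ ((α + t * c / (2 * L) : ℝ) : ℂ)
          ((Real.pi : ℂ) * Complex.I / (L : ℂ))).re ∧
      (jacobiTheta₂ ((α : ℝ) : ℂ) ((Real.pi : ℂ) * Complex.I / (L : ℂ))).im = 0 ∧
      0 < (jacobiTheta₂ ((α : ℝ) : ℂ) ((Real.pi : ℂ) * Complex.I / (L : ℂ))).re := by
  obtain ⟨hu0, hu1⟩ := hu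
  have hL0 : 0 < L := by
    rw [hL]
    have h1 : 1 < 1 / u := one_lt_one_div hu0 hu1
    have := Real.log_pos h1
    linarith
  have hLne : L ≠ 0 := hL0.ne'
  have hlog : Real.log u = -(2 * L) := by
    have h : Real.log (1 / u) = -Real.log u := by rw [one_div, Real.log_inv]
    rw [h] at hL; linarith
  have hu_exp : ∀ x : ℝ, u ^ x = Real.exp (-(2 * L) * x) := fun x => by
    rw [Real.rpow_def_of_pos hu0, hlog]
  set β' : ℝ := α + t * c / (2 * L) with hβ'
  set K : ℝ := t ^ 2 * c ^ 2 / (4 * L) with hK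
  set S : ℝ := ∑' n : ℤ, Real.exp (-L * ((n : ℝ) - α) ^ 2) with hS
  set N : ℝ := ∑' n : ℤ, Real.exp (-L * ((n : ℝ) - β') ^ 2) with hN
  have hterm1 : ∀ k : ℤ, u ^ ((((k : ℝ) - α) ^ 2) / 2) = Real.exp (-L * ((k : ℝ) - α) ^ 2) :=
    fun k => by rw [hu_exp]; congr 1; ring
  have hterm2 : ∀ k : ℤ, Real.exp (-L * ((k : ℝ) - α) ^ 2) * Real.exp (t * c * ((k : ℝ) - α)) =
      Real.exp K * Real.exp (-L * ((k : ℝ) - β') ^ 2) := fun k => by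
    rw [← Real.exp_add, ← Real.exp_add, hK, hβ']
    congr 1
    field_simp
    ring
  have hSsum := gauss_summable L α hL0
  have hNsum := gauss_summable L β' hL0
  have hSpos : 0 < S := hSsum.tsum_pos (fun n => (Real.exp_pos _).le) 0 (Real.exp_pos _)
  have hNpos : 0 < N := hNsum.tsum_pos (fun n => (Real.exp_pos _).le) 0 (Real.exp_pos _)
  have hden : (∑' j : ℤ, u ^ ((((j : ℝ) - α) ^ 2) / 2)) = S := tsum_congr hterm1
  have hnum : (∑' ℓ : ℤ, u ^ ((((ℓ : ℝ) - α) ^ 2) / 2) * Real.exp (t * c * ((ℓ : ℝ) - α)))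
      = Real.exp K * N := by
    rw [hN, ← tsum_mul_left]
    exact tsum_congr fun k => by rw [hterm1, hterm2]
  set g : ℤ → ℝ := fun k => Real.exp (t * (c * ((k : ℝ) - α))) with hg
  have hgm : Measurable g := measurable_from_top
  have hmap : ∀ k : ℤ, ((μ.map X) {k}).toReal = Real.exp (-L * ((k : ℝ) - α) ^ 2) / S := by
    intro k
    rw [Measure.map_apply hX (measurableSet_singleton k)]
    have h1 : X ⁻¹' {k} = {ω | X ω = k} := rfl
    rw [h1, hpmf, hden, hterm1]
  have hterm3 : ∀ k : ℤ, Real.exp K / S * Real.exp (-L * ((k : ℝ) - β') ^ 2)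
      = g k * (Real.exp (-L * ((k : ℝ) - α) ^ 2) / S) := by
    intro k
    have h2 := hterm2 k
    have h3 : g k = Real.exp (t * c * ((k : ℝ) - α)) := by rw [hg]; ring_nf
    rw [h3, div_mul_eq_mul_div, ← h2]
    ring
  have hsum2 : Summable (fun k : ℤ => g k * (Real.exp (-L * ((k : ℝ) - α) ^ 2) / S)) :=
    (hNsum.mul_left (Real.exp K / S)).congr fun k => (hterm3 k)
  have hint : Integrable g (μ.map X) := by
    refine ⟨hgm.aestronglyMeasurable, ?_⟩
    rw [HasFiniteIntegral, lintegral_countable']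
    have heq : ∀ k : ℤ, ‖g k‖ₑ * (μ.map X) {k}
        = ENNReal.ofReal (g k * (Real.exp (-L * ((k : ℝ) - α) ^ 2) / S)) := by
      intro k
      rw [← ENNReal.ofReal_toReal (measure_ne_top (μ.map X) {k}), hmap k,
        Real.enorm_eq_ofReal (Real.exp_pos _).le,
        ← ENNReal.ofReal_mul (Real.exp_pos _).le]
    rw [tsum_congr heq, ← ENNReal.ofReal_tsum_of_nonneg (fun k => by positivity) hsum2]
    exact ENNReal.ofReal_lt_top
  have hval : (∫ ω, Real.exp (t * (c * ((X ω : ℝ) - α))) ∂μ) = Real.exp K * N / S := by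
    have h1 : (∫ ω, Real.exp (t * (c * ((X ω : ℝ) - α))) ∂μ) = ∫ k, g k ∂(μ.map X) :=
      (integral_map hX.aemeasurable hgm.aestronglyMeasurable).symm
    rw [h1, integral_countable' hint]
    have h2 : ∀ k : ℤ, ((μ.map X) {k}).toReal • g k
        = Real.exp K / S * Real.exp (-L * ((k : ℝ) - β') ^ 2) := by
      intro k
      rw [smul_eq_mul, hmap k, hterm3 k]
      ring
    rw [show (∑' x : ℤ, (μ.map X).real {x} • g x) = ∑' x : ℤ, ((μ.map X) {x}).toReal • g x from rfl,
      tsum_congr h2, tsum_mul_left, ← hN]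
    ring
  have hθN := theta_real L β' hL0
  have hθS := theta_real L α hL0
  have hs : (0:ℝ) < (L / π) ^ ((1:ℝ)/2) :=
    Real.rpow_pos_of_pos (div_pos hL0 Real.pi_pos) _
  refine ⟨by rw [hval, hnum, hden], ?_, ?_, ?_, ?_, ?_⟩
  · rw [hval, hθN, hθS, ← Complex.ofReal_exp]
    rw [← Complex.ofReal_mul, ← Complex.ofReal_div, Complex.ofReal_inj]
    rw [mul_comm ((L / π) ^ ((1:ℝ)/2)) N, mul_comm ((L / π) ^ ((1:ℝ)/2)) S,
      ← mul_assoc, mul_div_mul_right _ _ hs.ne']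
  · rw [hθN]; exact Complex.ofReal_im _
  · rw [hθN, Complex.ofReal_re, ← hN]; exact mul_pos hs hNpos
  · rw [hθS]; exact Complex.ofReal_im _
  · rw [hθS, Complex.ofReal_re, ← hS]; exact mul_pos hs hSpos
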